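/- arXiv:1611.00233 — 3 statements merged into one kernel-verified Lean document; each statement's English description precedes it below -/
import Mathlib

section
/- The measure ν_{κ,∞} = |κ|δ₁ + (1/2π)√(1 - κ²/sin²(θ/2)) 𝟙{|sin(θ/2)| ≥ |κ|} dθ on the unit circle is a probability measure, i.e., (1/2π)∫_{{θ ∈ [-π,π] : |sin(θ/2)| ≥ |κ|}} √(1 - κ²/sin²(θ/2)) dθ = 1 - |κ|. -/
open Real MeasureTheory

set_option maxHeartbeats 1000000

lemma nu_key (a : ℝ) (ha : 0 < a) (ha1 : a < 1) :
    ∫ θ in (2 * Real.arcsin a)..π,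
        Real.sqrt (1 - a ^ 2 / Real.sin (θ / 2) ^ 2) = π * (1 - a) := by
  have ha01 : (-1 : ℝ) ≤ a := by linarith
  set b := Real.sqrt (1 - a ^ 2) with hbdef
  have hb0 : 0 < b := Real.sqrt_pos.2 (by nlinarith)
  have hb2 : b ^ 2 = 1 - a ^ 2 := Real.sq_sqrt (by nlinarith)
  set c := 2 * Real.arcsin a with hcdef
  have harc : 0 < Real.arcsin a := Real.arcsin_pos.2 ha
  have harc2 : Real.arcsin a ≤ π / 2 := Real.arcsin_le_pi_div_two a
  have hc0 : 0 < c := by positivity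
  have hcπ : c ≤ π := by rw [hcdef]; linarith
  set H : ℝ → ℝ := fun θ => -2 * Real.arcsin (Real.cos (θ / 2) / b)
      + 2 * a * Real.arcsin (a * Real.cos (θ / 2) / (b * Real.sin (θ / 2))) with hHdef
  have hsin : ∀ θ ∈ Set.Icc c π, 0 < Real.sin (θ / 2) := by
    intro θ hθ
    exact Real.sin_pos_of_pos_of_lt_pi (by linarith [hθ.1]) (by linarith [hθ.2, Real.pi_pos])
  -- continuity of H on [c, π]
  have hcont : ContinuousOn H (Set.Icc c π) := by
    apply ContinuousOn.add
    · exact (continuous_const.mul (Real.continuous_arcsin.comp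
        ((Real.continuous_cos.comp (continuous_id.div_const 2)).div_const b))).continuousOn
    · apply ContinuousOn.mul continuousOn_const
      apply Real.continuous_arcsin.comp_continuousOn
      apply ContinuousOn.div
      · exact (continuous_const.mul (Real.continuous_cos.comp
          (continuous_id.div_const 2))).continuousOn
      · exact (continuous_const.mul (Real.continuous_sin.comp
          (continuous_id.div_const 2))).continuousOn
      · intro θ hθ
        exact mul_ne_zero hb0.ne' (hsin θ hθ).ne'
  -- integrand continuity / integrability
  have hgcont : ContinuousOn (fun θ => Real.sqrt (1 - a ^ 2 / Real.sin (θ / 2) ^ 2))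
      (Set.Icc c π) := by
    apply Real.continuous_sqrt.comp_continuousOn
    apply ContinuousOn.sub continuousOn_const
    apply ContinuousOn.div continuousOn_const
    · exact ((Real.continuous_sin.comp (continuous_id.div_const 2)).pow 2).continuousOn
    · intro θ hθ
      exact pow_ne_zero 2 (hsin θ hθ).ne'
  have hint : IntervalIntegrable (fun θ => Real.sqrt (1 - a ^ 2 / Real.sin (θ / 2) ^ 2))
      volume c π := hgcont.intervalIntegrable_of_Icc hcπ
  -- the derivative
  have hderiv : ∀ θ ∈ Set.Ioo c π,
      HasDerivAt H (Real.sqrt (1 - a ^ 2 / Real.sin (θ / 2) ^ 2)) θ := by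
    intro θ hθ
    set s := Real.sin (θ / 2) with hsdef
    set o := Real.cos (θ / 2) with hodef
    have hpyth : s ^ 2 + o ^ 2 = 1 := Real.sin_sq_add_cos_sq (θ / 2)
    have hs0 : 0 < s := hsin θ ⟨hθ.1.le, hθ.2.le⟩
    have ho0 : 0 < o := Real.cos_pos_of_mem_Ioo
      ⟨by linarith [hθ.1, Real.pi_pos], by linarith [hθ.2]⟩
    have has : a < s := by
      have : Real.arcsin a < θ / 2 := by rw [hcdef] at hθ; linarith [hθ.1]
      calc a = Real.sin (Real.arcsin a) := (Real.sin_arcsin ha01 ha1.le).symm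
        _ < s := Real.strictMonoOn_sin ⟨by linarith, harc2⟩
          ⟨by linarith, by linarith [hθ.2]⟩ this
    have hob : o < b := by nlinarith
    set D := Real.sqrt (s ^ 2 - a ^ 2) with hDdef
    have hD0 : 0 < D := Real.sqrt_pos.2 (by nlinarith)
    have hD2 : D ^ 2 = s ^ 2 - a ^ 2 := Real.sq_sqrt (by nlinarith)
    -- derivative pieces
    have hhalf : HasDerivAt (fun θ : ℝ => θ / 2) (1 / 2) θ := by
      simpa using (hasDerivAt_id θ).div_const 2
    have hcos : HasDerivAt (fun θ : ℝ => Real.cos (θ / 2)) (-s * (1 / 2)) θ :=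
      by have := (Real.hasDerivAt_cos (θ / 2)).comp θ hhalf; exact this
    have hsin' : HasDerivAt (fun θ : ℝ => Real.sin (θ / 2)) (o * (1 / 2)) θ :=
      by have := (Real.hasDerivAt_sin (θ / 2)).comp θ hhalf; exact this
    have h1 : HasDerivAt (fun θ : ℝ => Real.arcsin (Real.cos (θ / 2) / b))
        (1 / Real.sqrt (1 - (o / b) ^ 2) * (-s * (1 / 2) / b)) θ := by
      have hne1 : o / b ≠ -1 := by
        have h : 0 < o / b := by positivity
        exact (by linarith : (-1:ℝ) < o / b).ne'
      have hne2 : o / b ≠ 1 := by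
        have : o / b < 1 := (div_lt_one hb0).2 hob
        linarith
      exact (Real.hasDerivAt_arcsin hne1 hne2).comp θ (hcos.div_const b)
    have h2 : HasDerivAt
        (fun θ : ℝ => Real.arcsin (a * Real.cos (θ / 2) / (b * Real.sin (θ / 2))))
        (1 / Real.sqrt (1 - (a * o / (b * s)) ^ 2) *
          ((a * (-s * (1 / 2)) * (b * s) - a * o * (b * (o * (1 / 2)))) / (b * s) ^ 2)) θ := by
      have hne1 : a * o / (b * s) ≠ -1 := by
        have h : 0 < a * o / (b * s) := by positivity
        exact (by linarith : (-1:ℝ) < a * o / (b * s)).ne'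
      have hne2 : a * o / (b * s) ≠ 1 := by
        have : a * o / (b * s) < 1 := by
          rw [div_lt_one (by positivity)]
          nlinarith
        linarith
      exact (Real.hasDerivAt_arcsin hne1 hne2).comp θ
        ((hcos.const_mul a).div (hsin'.const_mul b) (by positivity))
    have hH : HasDerivAt H
        (-2 * (1 / Real.sqrt (1 - (o / b) ^ 2) * (-s * (1 / 2) / b))
          + 2 * a * (1 / Real.sqrt (1 - (a * o / (b * s)) ^ 2) *
            ((a * (-s * (1 / 2)) * (b * s) - a * o * (b * (o * (1 / 2)))) / (b * s) ^ 2)) ) θ :=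
      (h1.const_mul (-2)).add (h2.const_mul (2 * a))
    have hpa : a ^ 2 * s ^ 2 + a ^ 2 * o ^ 2 = a ^ 2 := by nlinarith [hpyth]
    have e1 : Real.sqrt (1 - (o / b) ^ 2) = D / b := by
      rw [show 1 - (o / b) ^ 2 = (D / b) ^ 2 by
        rw [div_pow, div_pow, hD2]
        field_simp
        linarith [hpyth, hb2]]
      exact Real.sqrt_sq (by positivity)
    have e2 : Real.sqrt (1 - (a * o / (b * s)) ^ 2) = D / (b * s) := by
      rw [show 1 - (a * o / (b * s)) ^ 2 = (D / (b * s)) ^ 2 by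
        rw [div_pow, div_pow, hD2, mul_pow b s, hb2, mul_pow a o]
        have h1a : (1:ℝ) - a ^ 2 ≠ 0 := by nlinarith
        field_simp
        ring_nf
        nlinarith [hpa]]
      exact Real.sqrt_sq (by positivity)
    have e3 : Real.sqrt (1 - a ^ 2 / s ^ 2) = D / s := by
      rw [show 1 - a ^ 2 / s ^ 2 = (D / s) ^ 2 by
        rw [div_pow, hD2]
        field_simp [hs0.ne']]
      exact Real.sqrt_sq (by positivity)
    have hnum : a * (-s * (1 / 2)) * (b * s) - a * o * (b * (o * (1 / 2)))
        = -(a * b) / 2 := by linear_combination (-(a * b) / 2) * hpyth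
    have : (-2 * (1 / Real.sqrt (1 - (o / b) ^ 2) * (-s * (1 / 2) / b))
          + 2 * a * (1 / Real.sqrt (1 - (a * o / (b * s)) ^ 2) *
            ((a * (-s * (1 / 2)) * (b * s) - a * o * (b * (o * (1 / 2)))) / (b * s) ^ 2)) )
        = Real.sqrt (1 - a ^ 2 / s ^ 2) := by
      rw [e1, e2, e3, hnum]
      field_simp
      linear_combination (-1:ℝ) * hD2
    rw [← hsdef] at *
    exact this ▸ hH
  rw [intervalIntegral.integral_eq_sub_of_hasDerivAt_of_le hcπ hcont hderiv hint]
  have hHπ : H π = 0 := by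
    simp only [hHdef]
    norm_num [Real.cos_pi_div_two]
  have hc2 : c / 2 = Real.arcsin a := by rw [hcdef]; ring
  have hHc : H c = -π + a * π := by
    simp only [hHdef]
    rw [hc2, Real.cos_arcsin, Real.sin_arcsin ha01 ha1.le, ← hbdef]
    rw [div_self hb0.ne', show a * b / (b * a) = 1 by rw [mul_comm a b, div_self (by positivity)],
      Real.arcsin_one]
    ring
  rw [hHπ, hHc]; ring

theorem nu_infty_probability (κ : ℝ) (hκ : κ ∈ Set.Ioo (-1 : ℝ) 1) :
    (1 / (2 * π)) * ∫ θ in {θ : ℝ | θ ∈ Set.Icc (-π) π ∧ |κ| ≤ |Real.sin (θ / 2)|},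
        Real.sqrt (1 - κ ^ 2 / Real.sin (θ / 2) ^ 2)
      = 1 - |κ| := by
  have hπ : 0 < π := Real.pi_pos
  rcases eq_or_ne κ 0 with rfl | hκ0
  · have hset : {θ : ℝ | θ ∈ Set.Icc (-π) π ∧ |(0:ℝ)| ≤ |Real.sin (θ / 2)|}
        = Set.Icc (-π) π := by
      ext θ; simp [abs_nonneg]
    rw [hset]
    simp only [ne_eq, OfNat.ofNat_ne_zero, not_false_eq_true, zero_pow, zero_div, sub_zero,
      Real.sqrt_one]
    rw [setIntegral_const]
    simp [Real.volume_Icc]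
    rw [max_eq_left (by linarith)]
    field_simp
    ring
  · set a := |κ| with hadef
    have ha : 0 < a := abs_pos.2 hκ0
    have ha1 : a < 1 := abs_lt.2 ⟨hκ.1, hκ.2⟩
    set c := 2 * Real.arcsin a with hcdef
    have harc : 0 < Real.arcsin a := Real.arcsin_pos.2 ha
    have harc2 : Real.arcsin a ≤ π / 2 := Real.arcsin_le_pi_div_two a
    have hc0 : 0 < c := by positivity
    have hcπ : c ≤ π := by rw [hcdef]; linarith
    have hκa : κ ^ 2 = a ^ 2 := (sq_abs κ).symm
    have hset : {θ : ℝ | θ ∈ Set.Icc (-π) π ∧ |κ| ≤ |Real.sin (θ / 2)|}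
        = Set.Icc (-π) (-c) ∪ Set.Icc c π := by
      ext θ
      simp only [Set.mem_setOf_eq, Set.mem_Icc, Set.mem_union]
      constructor
      · rintro ⟨⟨h1, h2⟩, h3⟩
        rcases le_or_gt 0 θ with hθ0 | hθ0
        · right
          refine ⟨?_, h2⟩
          have hs0 : 0 ≤ Real.sin (θ / 2) :=
            Real.sin_nonneg_of_nonneg_of_le_pi (by linarith) (by linarith)
          rw [abs_of_nonneg hs0, ← hadef] at h3
          have : Real.arcsin a ≤ Real.arcsin (Real.sin (θ / 2)) :=
            Real.monotone_arcsin h3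
          rw [Real.arcsin_sin (by linarith) (by linarith)] at this
          rw [hcdef]; linarith
        · left
          refine ⟨h1, ?_⟩
          have hs0 : Real.sin (θ / 2) ≤ 0 := by
            have := Real.sin_nonneg_of_nonneg_of_le_pi (x := -θ / 2) (by linarith) (by linarith)
            rw [neg_div, Real.sin_neg] at this; linarith
          rw [abs_of_nonpos hs0, ← hadef] at h3
          have : Real.arcsin a ≤ Real.arcsin (-Real.sin (θ / 2)) :=
            Real.monotone_arcsin h3
          rw [← Real.sin_neg, ← neg_div,
            Real.arcsin_sin (by linarith) (by linarith)] at this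
          rw [hcdef]; linarith
      · rintro (⟨h1, h2⟩ | ⟨h1, h2⟩)
        · refine ⟨⟨h1, by linarith⟩, ?_⟩
          have hs : Real.sin (-θ / 2) ≥ a := by
            calc a = Real.sin (Real.arcsin a) := (Real.sin_arcsin (by linarith) ha1.le).symm
              _ ≤ Real.sin (-θ / 2) := by
                apply (Real.strictMonoOn_sin.monotoneOn) ⟨by linarith, harc2⟩
                  ⟨by linarith, by linarith⟩
                rw [hcdef] at h2; linarith
          rw [neg_div, Real.sin_neg] at hs
          rw [← hadef]
          calc a ≤ -Real.sin (θ / 2) := hs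
            _ ≤ |Real.sin (θ / 2)| := neg_le_abs _
        · refine ⟨⟨by linarith, h2⟩, ?_⟩
          have hs : Real.sin (θ / 2) ≥ a := by
            calc a = Real.sin (Real.arcsin a) := (Real.sin_arcsin (by linarith) ha1.le).symm
              _ ≤ Real.sin (θ / 2) := by
                apply (Real.strictMonoOn_sin.monotoneOn) ⟨by linarith, harc2⟩
                  ⟨by linarith, by linarith⟩
                rw [hcdef] at h1; linarith
          rw [← hadef]
          exact hs.trans (le_abs_self _)
    rw [hset, hκa]
    set f : ℝ → ℝ := fun θ => Real.sqrt (1 - a ^ 2 / Real.sin (θ / 2) ^ 2) with hfdef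
    have hcont1 : ContinuousOn f (Set.Icc (-π) (-c)) := by
      apply Real.continuous_sqrt.comp_continuousOn
      apply ContinuousOn.sub continuousOn_const
      apply ContinuousOn.div continuousOn_const
      · exact ((Real.continuous_sin.comp (continuous_id.div_const 2)).pow 2).continuousOn
      · intro θ hθ
        have : Real.sin (θ / 2) < 0 :=
          Real.sin_neg_of_neg_of_neg_pi_lt (by linarith [hθ.2]) (by linarith [hθ.1])
        exact pow_ne_zero 2 this.ne
    have hcont2 : ContinuousOn f (Set.Icc c π) := by
      apply Real.continuous_sqrt.comp_continuousOn
      apply ContinuousOn.sub continuousOn_const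
      apply ContinuousOn.div continuousOn_const
      · exact ((Real.continuous_sin.comp (continuous_id.div_const 2)).pow 2).continuousOn
      · intro θ hθ
        have : 0 < Real.sin (θ / 2) :=
          Real.sin_pos_of_pos_of_lt_pi (by linarith [hθ.1]) (by linarith [hθ.2])
        exact pow_ne_zero 2 this.ne'
    have hdisj : Disjoint (Set.Icc (-π) (-c)) (Set.Icc c π) := by
      apply Set.disjoint_left.2
      rintro x ⟨_, hx2⟩ ⟨hx3, _⟩
      linarith
    rw [setIntegral_union hdisj measurableSet_Icc
      (hcont1.integrableOn_Icc) (hcont2.integrableOn_Icc)]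
    have hI2 : ∫ θ in Set.Icc c π, f θ = π * (1 - a) := by
      rw [MeasureTheory.integral_Icc_eq_integral_Ioc,
        ← intervalIntegral.integral_of_le hcπ]
      exact nu_key a ha ha1
    have hI1 : ∫ θ in Set.Icc (-π) (-c), f θ = π * (1 - a) := by
      rw [MeasureTheory.integral_Icc_eq_integral_Ioc,
        ← intervalIntegral.integral_of_le (by linarith : -π ≤ -c),
        ← intervalIntegral.integral_comp_neg f]
      have : ∀ x, f (-x) = f x := by
        intro x
        rw [hfdef]
        simp [neg_div, Real.sin_neg]
      simp_rw [this]
      rw [intervalIntegral.integral_of_le hcπ, ← MeasureTheory.integral_Icc_eq_integral_Ioc]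
      exact hI2
    rw [hI1, hI2]
    field_simp
    ring
end

section
/- Let t > 2. There exists a unique d_t ∈ (√((t-2)/t), 1) such that ξ_t(d_t) = -1, where ξ_t(a) = e^{ta}(a-1)/(a+1); moreover ξ_t is strictly increasing on (d_t, ∞) restricted to where its derivative is positive, i.e., ξ_t'(a) > 0 for a > √((t-2)/t). -/
open Real Set

theorem xi_root_and_deriv_pos (t : ℝ) (ht : 2 < t) :
    (∃! d : ℝ, d ∈ Set.Ioo (Real.sqrt ((t - 2) / t)) 1 ∧
        (d - 1) / (d + 1) * Real.exp (t * d) = -1) ∧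
    ∀ a : ℝ, Real.sqrt ((t - 2) / t) < a →
      0 < Real.exp (t * a) * (t * a ^ 2 + 2 - t) / (a + 1) ^ 2 := by
  have ht0 : (0:ℝ) < t := by linarith
  set s := Real.sqrt ((t - 2) / t) with hs_def
  have hfrac_pos : 0 < (t - 2) / t := div_pos (by linarith) ht0
  have hs_pos : 0 < s := Real.sqrt_pos.mpr hfrac_pos
  have hs_sq : s ^ 2 = (t - 2) / t := Real.sq_sqrt hfrac_pos.le
  have hts : t * s ^ 2 = t - 2 := by
    rw [hs_sq]; field_simp
  have hs_lt_one : s < 1 := by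
    rw [hs_def, show (1:ℝ) = Real.sqrt 1 by simp]
    exact Real.sqrt_lt_sqrt hfrac_pos.le (by rw [div_lt_one ht0]; linarith)
  have h1s : 0 < 1 - s := by linarith
  have h1s' : 0 < 1 + s := by linarith
  -- positivity of the derivative expression
  have hpos : ∀ a : ℝ, s < a →
      0 < Real.exp (t * a) * (t * a ^ 2 + 2 - t) / (a + 1) ^ 2 := by
    intro a ha
    have ha0 : 0 < a := hs_pos.trans ha
    have hsq : s ^ 2 < a ^ 2 := by nlinarith
    have hnum : 0 < t * a ^ 2 + 2 - t := by nlinarith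
    have := Real.exp_pos (t * a)
    positivity
  -- key inequality: (1+s)/(1-s) < exp (t*s)
  have hx1 : 1 < (1 + s) / (1 - s) := by rw [lt_div_iff₀ h1s]; linarith
  have hkey : (1 + s) / (1 - s) < Real.exp (t * s) := by
    have hy : 0 < Real.log ((1 + s) / (1 - s)) := Real.log_pos hx1
    have hsinh : Real.sinh (Real.log ((1 + s) / (1 - s))) = t * s := by
      rw [Real.sinh_log (by positivity)]
      have h2 : t * (1 - s ^ 2) = 2 := by nlinarith
      field_simp
      nlinarith [h2]
    have h3 := Real.self_lt_sinh_iff.mpr hy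
    rw [hsinh] at h3
    calc (1 + s) / (1 - s) = Real.exp (Real.log ((1 + s) / (1 - s))) :=
          (Real.exp_log (by positivity)).symm
      _ < Real.exp (t * s) := Real.exp_lt_exp.mpr h3
  set f : ℝ → ℝ := fun x => (x - 1) / (x + 1) * Real.exp (t * x) with hf_def
  have hderiv : ∀ a : ℝ, -1 < a → HasDerivAt f
      (Real.exp (t * a) * (t * a ^ 2 + 2 - t) / (a + 1) ^ 2) a := by
    intro a ha
    have ha' : a + 1 ≠ 0 := by intro h; nlinarith [h]
    have hg : HasDerivAt (fun x : ℝ => (x - 1) / (x + 1)) (2 / (a + 1) ^ 2) a := by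
      have := ((hasDerivAt_id a).sub_const 1).div ((hasDerivAt_id a).add_const 1) ha'
      refine this.congr_deriv ?_
      simp only [id]
      field_simp
      ring
    have hh : HasDerivAt (fun x : ℝ => Real.exp (t * x)) (Real.exp (t * a) * t) a := by
      simpa using ((hasDerivAt_id a).const_mul t).exp
    have := hg.mul hh
    refine this.congr_deriv ?_
    field_simp
    ring
  have hcont : ContinuousOn f (Icc s 1) := by
    intro a haI
    exact ((hderiv a (by have := haI.1; linarith)).continuousAt).continuousWithinAt
  have hmono : StrictMonoOn f (Icc s 1) := by
    apply strictMonoOn_of_deriv_pos (convex_Icc s 1) hcont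
    intro a ha
    rw [interior_Icc] at ha
    rw [(hderiv a (by have := ha.1; linarith)).deriv]
    exact hpos a ha.1
  have hfs : f s < -1 := by
    have hE : (1 + s) < Real.exp (t * s) * (1 - s) := by
      rw [div_lt_iff₀ h1s] at hkey; linarith
    have hE' : Real.exp (t * s) > 0 := Real.exp_pos _
    show (s - 1) / (s + 1) * Real.exp (t * s) < -1
    rw [div_mul_eq_mul_div, div_lt_iff₀ (by linarith : (0:ℝ) < s + 1)]
    nlinarith
  have hf1 : f 1 = 0 := by simp [hf_def]
  have hivt : (-1:ℝ) ∈ f '' (Ioo s 1) := by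
    apply intermediate_value_Ioo hs_lt_one.le hcont
    exact ⟨hfs, by rw [hf1]; norm_num⟩
  obtain ⟨d, hdIoo, hfd⟩ := hivt
  refine ⟨⟨d, ⟨hdIoo, hfd⟩, ?_⟩, hpos⟩
  rintro e ⟨heIoo, hfe⟩
  exact hmono.injOn (Ioo_subset_Icc_self heIoo) (Ioo_subset_Icc_self hdIoo)
    (hfe.trans hfd.symm)
end

section
/- Let b_n(0,t) = (e^{-nt}/n)·L_{n-1}^{(1)}(2nt) for n ≥ 1 and b_0(0,t) = 1, where L_k^{(1)} is the Laguerre polynomial of parameter 1. Then b_n satisfies d/dt b_n(0,t) = -n·b_n(0,t) - n·Σ_{k=1}^{n-1} b_k(0,t)·b_{n-k}(0,t), with b_n(0,0) = 1. -/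
open Real Finset

/-- generalized Laguerre polynomial L_k^{(1)} -/
noncomputable def laguerreOne (k : ℕ) (x : ℝ) : ℝ :=
  ∑ j ∈ Finset.range (k + 1),
    (-1 : ℝ) ^ j * (Nat.choose (k + 1) (k - j)) * x ^ j / (Nat.factorial j)

/-- moments b_n(0,t) of the free unitary Brownian motion -/
noncomputable def bMom (n : ℕ) (t : ℝ) : ℝ :=
  if n = 0 then 1 else Real.exp (-(n : ℝ) * t) / n * laguerreOne (n - 1) (2 * n * t)

open PowerSeries

namespace BMomAux

/-- key coefficient computation -/
lemma termA (φ : ℝ⟦X⟧) (hφ : constantCoeff φ ≠ 0) (m : ℕ) :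
    coeff m (φ ^ (m + 1) * (φ⁻¹ + X * (d⁄dX ℝ) φ⁻¹)) = if m = 0 then 1 else 0 := by
  have hmul : φ * φ⁻¹ = 1 := PowerSeries.mul_inv_cancel φ hφ
  cases m with
  | zero =>
    rw [if_pos rfl, pow_one, mul_add]
    have hX : φ * (X * (d⁄dX ℝ) φ⁻¹) = X * (φ * (d⁄dX ℝ) φ⁻¹) := by ring
    rw [map_add, hmul, hX]
    simp [PowerSeries.coeff_zero_eq_constantCoeff, map_mul, constantCoeff_X]
  | succ m' =>
    have h1 : φ ^ (m' + 1 + 1) * φ⁻¹ = φ ^ (m' + 1) := by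
      rw [pow_succ, mul_assoc, hmul, mul_one]
    have h2 : φ ^ (m' + 1 + 1) * (X * (d⁄dX ℝ) φ⁻¹)
        = X * (-(φ ^ m' * (d⁄dX ℝ) φ)) := by
      rw [PowerSeries.derivative_inv']
      have : φ ^ (m' + 1 + 1) = φ ^ m' * φ ^ 2 := by ring
      rw [this]
      have hsq : φ ^ 2 * φ⁻¹ ^ 2 = 1 := by
        rw [← mul_pow, hmul, one_pow]
      calc φ ^ m' * φ ^ 2 * (X * (-φ⁻¹ ^ 2 * (d⁄dX ℝ) φ))
          = X * (-((φ ^ 2 * φ⁻¹ ^ 2) * (φ ^ m' * (d⁄dX ℝ) φ))) := by ring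
        _ = X * (-(φ ^ m' * (d⁄dX ℝ) φ)) := by rw [hsq, one_mul]
    have key : (m' + 1 : ℝ) * coeff m' (φ ^ m' * (d⁄dX ℝ) φ)
        = (m' + 1 : ℝ) * coeff (m' + 1) (φ ^ (m' + 1)) := by
      have hd := Derivation.leibniz_pow (d⁄dX ℝ) φ (m' + 1)
      have := congrArg (fun ψ => coeff m' ψ) hd
      simp only [Nat.add_sub_cancel] at this
      rw [map_nsmul] at this
      simp only [smul_eq_mul, nsmul_eq_mul] at this
      rw [PowerSeries.coeff_derivative] at this
      push_cast at this ⊢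
      linarith [this]
    have key' : coeff m' (φ ^ m' * (d⁄dX ℝ) φ) = coeff (m' + 1) (φ ^ (m' + 1)) :=
      mul_left_cancel₀ (by positivity) key
    rw [if_neg (Nat.succ_ne_zero m'), mul_add, map_add, h1, h2,
      PowerSeries.coeff_succ_X_mul, map_neg, key']
    ring

end BMomAux

namespace BMomAux2
open BMomAux

lemma termB (φ : ℝ⟦X⟧) (hφ : constantCoeff φ ≠ 0) (a m : ℕ) :
    coeff (m + a) ((X * φ⁻¹) ^ a * (d⁄dX ℝ) (X * φ⁻¹) * φ ^ (a + m + 1))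
      = if m = 0 then 1 else 0 := by
  have hmul : φ * φ⁻¹ = 1 := PowerSeries.mul_inv_cancel φ hφ
  have hDf : (d⁄dX ℝ) (X * φ⁻¹) = φ⁻¹ + X * (d⁄dX ℝ) φ⁻¹ := by
    rw [Derivation.leibniz, PowerSeries.derivative_X, smul_eq_mul, smul_eq_mul, mul_one]
    ring
  have hone : φ⁻¹ ^ a * φ ^ a = 1 := by rw [← mul_pow, mul_comm, hmul, one_pow]
  have hre : (X * φ⁻¹) ^ a * (d⁄dX ℝ) (X * φ⁻¹) * φ ^ (a + m + 1)
      = X ^ a * (φ ^ (m + 1) * (φ⁻¹ + X * (d⁄dX ℝ) φ⁻¹)) := by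
    rw [hDf, mul_pow, pow_add, pow_add, pow_one]
    calc X ^ a * φ⁻¹ ^ a * (φ⁻¹ + X * (d⁄dX ℝ) φ⁻¹) * (φ ^ a * φ ^ m * φ)
        = (φ⁻¹ ^ a * φ ^ a) * (X ^ a * ((φ ^ m * φ) * (φ⁻¹ + X * (d⁄dX ℝ) φ⁻¹))) := by
          ring
      _ = X ^ a * (φ ^ (m + 1) * (φ⁻¹ + X * (d⁄dX ℝ) φ⁻¹)) := by
          rw [hone, one_mul, pow_succ]
  rw [hre, PowerSeries.coeff_X_pow_mul, termA φ hφ m]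

lemma extraction (φ : ℝ⟦X⟧) (hφ : constantCoeff φ ≠ 0) (γ : ℕ → ℝ) (j n : ℕ)
    (hj : 0 < j) (hjn : j ≤ n)
    (h : ∀ m, m ≤ n →
      coeff m ((X : ℝ⟦X⟧) ^ j - ∑ k ∈ Icc 1 n, γ k • (X * φ⁻¹) ^ k) = 0) :
    (n : ℝ) * γ n = j * coeff (n - j) (φ ^ n) := by
  set T : ℝ⟦X⟧ := (X : ℝ⟦X⟧) ^ j - ∑ k ∈ Icc 1 n, γ k • (X * φ⁻¹) ^ k with hT
  -- coefficient of the product vanishes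
  have hzero : coeff (n - 1) ((d⁄dX ℝ) T * φ ^ n) = 0 := by
    rw [PowerSeries.coeff_mul]
    apply Finset.sum_eq_zero
    rintro ⟨p, q⟩ hp
    have hpq : p + q = n - 1 := Finset.HasAntidiagonal.mem_antidiagonal.mp hp
    have hp1 : p + 1 ≤ n := by omega
    rw [PowerSeries.coeff_derivative, h (p + 1) hp1]
    ring
  -- expand
  have hDT : (d⁄dX ℝ) T * φ ^ n
      = j • ((X : ℝ⟦X⟧) ^ (j - 1) * φ ^ n)
        - ∑ k ∈ Icc 1 n, γ k • (k • ((X * φ⁻¹) ^ (k - 1) * (d⁄dX ℝ) (X * φ⁻¹) * φ ^ n)) := by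
    rw [hT, map_sub, map_sum]
    rw [Derivation.leibniz_pow, PowerSeries.derivative_X, smul_eq_mul, mul_one]
    rw [sub_mul, Finset.sum_mul, smul_mul_assoc]
    congr 1
    apply Finset.sum_congr rfl
    intro k _
    rw [Derivation.map_smul, Derivation.leibniz_pow, smul_eq_mul]
    rw [smul_mul_assoc, smul_mul_assoc, mul_assoc]
  have hcalc : coeff (n - 1) ((d⁄dX ℝ) T * φ ^ n)
      = (j : ℝ) * coeff (n - j) (φ ^ n) - (n : ℝ) * γ n := by
    rw [hDT, map_sub, map_nsmul, map_sum]
    have h1 : coeff (n - 1) ((X : ℝ⟦X⟧) ^ (j - 1) * φ ^ n) = coeff (n - j) (φ ^ n) := by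
      have : n - 1 = (n - j) + (j - 1) := by omega
      rw [this, PowerSeries.coeff_X_pow_mul]
    have h2 : ∀ k ∈ Icc 1 n,
        coeff (n - 1) (γ k • (k • ((X * φ⁻¹) ^ (k - 1) * (d⁄dX ℝ) (X * φ⁻¹) * φ ^ n)))
        = γ k * k * (if k = n then 1 else 0) := by
      intro k hk
      simp only [Finset.mem_Icc] at hk
      rw [PowerSeries.coeff_smul, map_nsmul]
      have hidx : n - 1 = (n - k) + (k - 1) := by omega
      have hpow : n = (k - 1) + (n - k) + 1 := by omega
      rw [hidx]
      rw [show φ ^ n = φ ^ ((k - 1) + (n - k) + 1) from by rw [← hpow]]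
      rw [termB φ hφ (k - 1) (n - k)]
      by_cases hkn : k = n
      · subst hkn; simp
      · have hnk : n - k ≠ 0 := by omega
        simp [hkn, hnk]
    rw [Finset.sum_congr rfl h2]
    have h3 : ∑ x ∈ Icc 1 n, γ x * x * (if x = n then 1 else 0) = γ n * n := by
      rw [Finset.sum_eq_single n]
      · simp
      · intro b _ hb; simp [hb]
      · intro hn'
        exact absurd (Finset.mem_Icc.mpr ⟨by omega, le_refl n⟩) hn'
    rw [h3, h1, nsmul_eq_mul]
    ring
  rw [hzero] at hcalc
  linarith [hcalc]

end BMomAux2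

namespace BMomAux3
open BMomAux BMomAux2

lemma coeff_f_pow_lo (φ : ℝ⟦X⟧) (i m : ℕ) (h : m < i) :
    coeff m ((X * φ⁻¹) ^ i) = 0 := by
  rw [mul_pow]
  exact PowerSeries.X_pow_dvd_iff.mp (dvd_mul_right _ _) m h

lemma coeff_f_pow_diag (φ : ℝ⟦X⟧) (i : ℕ) :
    coeff i ((X * φ⁻¹) ^ i) = ((constantCoeff φ)⁻¹) ^ i := by
  have h := PowerSeries.coeff_X_pow_mul (φ⁻¹ ^ i) i 0
  rw [Nat.zero_add] at h
  rw [mul_pow, h, PowerSeries.coeff_zero_eq_constantCoeff, map_pow,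
    PowerSeries.constantCoeff_inv]

lemma exists_b (φ : ℝ⟦X⟧) (hφ : constantCoeff φ ≠ 0) (N : ℕ) :
    ∃ b : ℕ → ℝ, ∀ m ≤ N,
      coeff m ((X : ℝ⟦X⟧) - ∑ k ∈ Icc 1 N, b k • (X * φ⁻¹) ^ k) = 0 := by
  induction N with
  | zero =>
    refine ⟨fun _ => 0, fun m hm => ?_⟩
    interval_cases m
    simp
  | succ N ih =>
    obtain ⟨b, hb⟩ := ih
    set c : ℝ := coeff (N + 1) ((X : ℝ⟦X⟧) - ∑ k ∈ Icc 1 N, b k • (X * φ⁻¹) ^ k)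
      / ((constantCoeff φ)⁻¹) ^ (N + 1) with hc
    refine ⟨Function.update b (N + 1) c, fun m hm => ?_⟩
    have hs : ∑ k ∈ Icc 1 (N + 1), Function.update b (N + 1) c k • (X * φ⁻¹) ^ k
        = (∑ k ∈ Icc 1 N, b k • (X * φ⁻¹) ^ k) + c • (X * φ⁻¹) ^ (N + 1) := by
      rw [Finset.sum_Icc_succ_top (by omega)]
      congr 1
      · apply Finset.sum_congr rfl
        intro k hk
        have : k ≠ N + 1 := by
          simp only [Finset.mem_Icc] at hk; omega
        rw [Function.update_of_ne this]
      · rw [Function.update_self]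
    rw [hs]
    have hexp : (X : ℝ⟦X⟧) - ((∑ k ∈ Icc 1 N, b k • (X * φ⁻¹) ^ k) + c • (X * φ⁻¹) ^ (N + 1))
        = ((X : ℝ⟦X⟧) - ∑ k ∈ Icc 1 N, b k • (X * φ⁻¹) ^ k) - c • (X * φ⁻¹) ^ (N + 1) := by
      ring
    rw [hexp, map_sub, PowerSeries.coeff_smul]
    rcases Nat.lt_or_ge m (N + 1) with hlt | hge
    · rw [hb m (by omega), coeff_f_pow_lo φ _ _ hlt, smul_zero, sub_zero]
    · have hm1 : m = N + 1 := by omega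
      subst hm1
      rw [coeff_f_pow_diag φ, hc, smul_eq_mul, div_mul_cancel₀, sub_self]
      exact pow_ne_zero _ (inv_ne_zero hφ)

lemma restrict (φ : ℝ⟦X⟧) (b : ℕ → ℝ) (N : ℕ)
    (hb : ∀ m ≤ N, coeff m ((X : ℝ⟦X⟧) - ∑ k ∈ Icc 1 N, b k • (X * φ⁻¹) ^ k) = 0)
    (K : ℕ) (hK : K ≤ N) :
    ∀ m ≤ K, coeff m ((X : ℝ⟦X⟧) - ∑ k ∈ Icc 1 K, b k • (X * φ⁻¹) ^ k) = 0 := by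
  intro m hm
  have h0 := hb m (hm.trans hK)
  have hsum : ∑ k ∈ Icc 1 K, coeff m (b k • (X * φ⁻¹) ^ k)
      = ∑ k ∈ Icc 1 N, coeff m (b k • (X * φ⁻¹) ^ k) := by
    apply Finset.sum_subset (Finset.Icc_subset_Icc_right hK)
    intro i hi hni
    simp only [Finset.mem_Icc] at hi hni
    have : m < i := by omega
    rw [PowerSeries.coeff_smul, coeff_f_pow_lo φ _ _ this, smul_zero]
  rw [map_sub, map_sum] at h0 ⊢
  rw [hsum]
  exact h0

end BMomAux3

namespace BMomAux4
open BMomAux BMomAux2 BMomAux3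

lemma square (φ : ℝ⟦X⟧) (b : ℕ → ℝ) (N : ℕ)
    (hb : ∀ m ≤ N, coeff m ((X : ℝ⟦X⟧) - ∑ k ∈ Icc 1 N, b k • (X * φ⁻¹) ^ k) = 0) :
    ∀ m ≤ N, coeff m ((X : ℝ⟦X⟧) ^ 2
      - ∑ k ∈ Icc 1 N, (∑ a ∈ Ico 1 k, b a * b (k - a)) • (X * φ⁻¹) ^ k) = 0 := by
  intro m hm
  set F : ℝ⟦X⟧ := X * φ⁻¹ with hF
  set S : ℝ⟦X⟧ := ∑ k ∈ Icc 1 N, b k • F ^ k with hS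
  have step1 : coeff m ((X : ℝ⟦X⟧) ^ 2) = coeff m (S * S) := by
    have hfac : (X : ℝ⟦X⟧) ^ 2 - S * S = (X - S) * (X + S) := by ring
    have : coeff m ((X : ℝ⟦X⟧) ^ 2 - S * S) = 0 := by
      rw [hfac, PowerSeries.coeff_mul]
      apply Finset.sum_eq_zero
      rintro ⟨p, q⟩ hp
      have hpq : p + q = m := Finset.HasAntidiagonal.mem_antidiagonal.mp hp
      rw [hb p (by omega), zero_mul]
    rw [map_sub] at this
    linarith [this]
  have hSS : S * S = ∑ p ∈ (Icc 1 N) ×ˢ (Icc 1 N), (b p.1 * b p.2) • F ^ (p.1 + p.2) := by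
    rw [hS, Finset.sum_mul_sum, ← Finset.sum_product']
    apply Finset.sum_congr rfl
    intro p _
    rw [smul_mul_smul_comm, pow_add]
  have step2 : coeff m (S * S)
      = coeff m (∑ k ∈ Icc 1 N, (∑ a ∈ Ico 1 k, b a * b (k - a)) • F ^ k) := by
    rw [hSS, map_sum, map_sum]
    have hL : ∀ p ∈ (Icc 1 N) ×ˢ (Icc 1 N),
        coeff m ((b p.1 * b p.2) • F ^ (p.1 + p.2))
          = (b p.1 * b p.2) * coeff m (F ^ (p.1 + p.2)) := by
      intro p _; rw [PowerSeries.coeff_smul, smul_eq_mul]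
    rw [Finset.sum_congr rfl hL]
    have hR : ∀ k ∈ Icc 1 N,
        coeff m ((∑ a ∈ Ico 1 k, b a * b (k - a)) • F ^ k)
          = ∑ a ∈ Ico 1 k, (b a * b (k - a)) * coeff m (F ^ k) := by
      intro k _
      rw [PowerSeries.coeff_smul, smul_eq_mul, Finset.sum_mul]
    rw [Finset.sum_congr rfl hR]
    rw [Finset.sum_sigma']
    set P := ((Icc 1 N) ×ˢ (Icc 1 N)).filter (fun p => p.1 + p.2 ≤ N) with hP
    have hshrink : ∑ p ∈ (Icc 1 N) ×ˢ (Icc 1 N), (b p.1 * b p.2) * coeff m (F ^ (p.1 + p.2))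
        = ∑ p ∈ P, (b p.1 * b p.2) * coeff m (F ^ (p.1 + p.2)) := by
      refine (Finset.sum_subset (Finset.filter_subset _ _) ?_).symm
      intro p hp hnp
      have h1 : m < p.1 + p.2 := by
        simp only [hP, Finset.mem_filter] at hnp
        by_contra hcon
        exact hnp ⟨hp, by omega⟩
      rw [coeff_f_pow_lo φ _ _ h1, mul_zero]
    rw [hshrink]
    refine Finset.sum_nbij' (fun p => (⟨p.1 + p.2, p.1⟩ : (_ : ℕ) × ℕ))
      (fun q => (q.2, q.1 - q.2)) ?_ ?_ ?_ ?_ ?_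
    · intro p hp
      simp only [hP, Finset.mem_filter, Finset.mem_product, Finset.mem_Icc] at hp
      simp only [Finset.mem_sigma, Finset.mem_Icc, Finset.mem_Ico]
      omega
    · intro q hq
      simp only [Finset.mem_sigma, Finset.mem_Icc, Finset.mem_Ico] at hq
      simp only [hP, Finset.mem_filter, Finset.mem_product, Finset.mem_Icc]
      omega
    · rintro ⟨p1, p2⟩ hp
      simp only [hP, Finset.mem_filter, Finset.mem_product, Finset.mem_Icc] at hp
      simp only [show p1 + p2 - p1 = p2 from by omega]
    · rintro ⟨k, a⟩ hq
      simp only [Finset.mem_sigma, Finset.mem_Icc, Finset.mem_Ico] at hq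
      simp only [show a + (k - a) = k from by omega]
    · intro p hp
      simp only [hP, Finset.mem_filter, Finset.mem_product, Finset.mem_Icc] at hp
      have : p.1 + p.2 - p.1 = p.2 := by omega
      simp [this]
  rw [map_sub, step1, step2, sub_self]

end BMomAux4

namespace BMomAux5
open BMomAux BMomAux2 BMomAux3 BMomAux4

theorem conv (φ : ℝ⟦X⟧) (hφ : constantCoeff φ ≠ 0) (n : ℕ) (hn : 2 ≤ n) :
    (n : ℝ) * ∑ k ∈ Ico 1 n,
        (coeff (k - 1) (φ ^ k) / k) * (coeff (n - k - 1) (φ ^ (n - k)) / (n - k))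
      = 2 * coeff (n - 2) (φ ^ n) := by
  obtain ⟨b, hb⟩ := exists_b φ hφ n
  have hbval : ∀ k, 1 ≤ k → k ≤ n → b k = coeff (k - 1) (φ ^ k) / k := by
    intro k h1 h2
    have hres := restrict φ b n hb k h2
    have hres' : ∀ m, m ≤ k →
        coeff m ((X : ℝ⟦X⟧) ^ 1 - ∑ i ∈ Icc 1 k, b i • (X * φ⁻¹) ^ i) = 0 := by
      intro m hm
      rw [pow_one]
      exact hres m hm
    have hext := extraction φ hφ b 1 k (by omega) h1 hres'
    have hk : (k : ℝ) ≠ 0 := by positivity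
    rw [eq_div_iff hk]
    rw [Nat.cast_one, one_mul] at hext
    linarith [hext]
  have hsq := square φ b n hb
  have hext2 := extraction φ hφ (fun k => ∑ a ∈ Ico 1 k, b a * b (k - a)) 2 n
    (by omega) hn hsq
  simp only [Nat.cast_ofNat] at hext2
  have hsum : ∑ a ∈ Ico 1 n, b a * b (n - a)
      = ∑ k ∈ Ico 1 n,
          (coeff (k - 1) (φ ^ k) / k) * (coeff (n - k - 1) (φ ^ (n - k)) / (n - k)) := by
    apply Finset.sum_congr rfl
    intro k hk
    simp only [Finset.mem_Ico] at hk
    rw [hbval k hk.1 (by omega), hbval (n - k) (by omega) (by omega),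
      Nat.cast_sub (by omega : k ≤ n)]
  rw [← hsum, hext2]

end BMomAux5

namespace BMomConcrete
open BMomAux5

noncomputable def Phi (t : ℝ) : ℝ⟦X⟧ :=
  (1 + X) * PowerSeries.rescale (-(2 * t)) (PowerSeries.exp ℝ)

lemma constantCoeff_Phi (t : ℝ) : constantCoeff (Phi t) = 1 := by
  rw [Phi, map_mul, map_add, map_one, constantCoeff_X, add_zero, one_mul,
    ← PowerSeries.coeff_zero_eq_constantCoeff, PowerSeries.coeff_rescale,
    PowerSeries.coeff_exp]
  simp

lemma coeff_one_add_X_pow_ps (a i : ℕ) :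
    coeff i ((1 + X : ℝ⟦X⟧) ^ a) = (a.choose i : ℝ) := by
  have h : ((1 + Polynomial.X : Polynomial ℝ) : ℝ⟦X⟧) = 1 + X := by
    rw [Polynomial.coe_add, Polynomial.coe_one, Polynomial.coe_X]
  rw [← h, ← Polynomial.coe_pow, Polynomial.coeff_coe, Polynomial.coeff_one_add_X_pow]

lemma Phi_pow (t : ℝ) (a : ℕ) :
    (Phi t) ^ a = (1 + X : ℝ⟦X⟧) ^ a
      * PowerSeries.rescale ((a : ℝ) * (-(2 * t))) (PowerSeries.exp ℝ) := by
  rw [Phi, mul_pow, ← map_pow, PowerSeries.exp_pow_eq_rescale_exp,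
    PowerSeries.rescale_rescale]

lemma coeff_Phi_pow (t : ℝ) (a m : ℕ) :
    coeff m ((Phi t) ^ a)
      = ∑ j ∈ range (m + 1),
          (a.choose (m - j) : ℝ) * ((a : ℝ) * (-(2 * t))) ^ j / (j.factorial : ℝ) := by
  rw [Phi_pow, PowerSeries.coeff_mul, Finset.Nat.sum_antidiagonal_eq_sum_range_succ_mk]
  rw [show m + 1 = (m + 1) from rfl]
  rw [← Finset.sum_range_reflect]
  apply Finset.sum_congr rfl
  intro j hj
  simp only [Finset.mem_range] at hj
  have h1 : m + 1 - 1 - j = m - j := by omega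
  have h2 : m - (m - j) = j := by omega
  rw [h1, h2, coeff_one_add_X_pow_ps, PowerSeries.coeff_rescale, PowerSeries.coeff_exp]
  have : (algebraMap ℚ ℝ) (1 / (j.factorial : ℚ)) = 1 / (j.factorial : ℝ) := by
    push_cast
    simp
  rw [this]
  ring

end BMomConcrete


namespace BMomLink
open PowerSeries BMomConcrete BMomAux5

lemma lag_eq (t : ℝ) (a : ℕ) (ha : 1 ≤ a) :
    laguerreOne (a - 1) (2 * a * t) = coeff (a - 1) ((Phi t) ^ a) := by
  rw [laguerreOne, coeff_Phi_pow]
  have h : a - 1 + 1 = a := by omega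
  rw [h]
  apply Finset.sum_congr rfl
  intro j hj
  have hneg : ((a : ℝ) * (-(2 * t))) ^ j = (-1) ^ j * (2 * (a:ℝ) * t) ^ j := by
    rw [show (a : ℝ) * (-(2 * t)) = (-1) * (2 * (a:ℝ) * t) by ring, mul_pow]
  rw [hneg]
  ring

lemma bMom_eq (t : ℝ) (a : ℕ) (ha : 1 ≤ a) :
    bMom a t = Real.exp (-(a : ℝ) * t) * (coeff (a - 1) ((Phi t) ^ a) / a) := by
  rw [bMom, if_neg (by omega), lag_eq t a ha]
  ring

lemma bMom_zero (n : ℕ) (hn : 1 ≤ n) : bMom n 0 = 1 := by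
  rw [bMom, if_neg (by omega)]
  have hl : laguerreOne (n - 1) (2 * n * 0) = (n : ℝ) := by
    rw [laguerreOne]
    rw [Finset.sum_eq_single 0]
    · have h1 : n - 1 + 1 = n := by omega
      have h2 : n - 1 - 0 = n - 1 := by omega
      rw [h1, h2]
      have h3 : n.choose (n - 1) = n := by
        rw [Nat.choose_symm (show 1 ≤ n by omega), Nat.choose_one_right]
      rw [h3]
      norm_num
    · intro b _ hb
      rw [mul_zero, zero_pow hb]
      ring
    · intro h0
      exact absurd (Finset.mem_range.mpr (by omega)) h0
  rw [hl, mul_zero, Real.exp_zero]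
  field_simp
end BMomLink

namespace BMomDeriv
open PowerSeries BMomConcrete BMomAux5 BMomLink

noncomputable def cc (n j : ℕ) : ℝ :=
  (-1) ^ j * (n.choose (n - 1 - j) : ℝ) * (2 * (n : ℝ)) ^ j / (j.factorial : ℝ)

lemma lag_fun (n : ℕ) (hn : 1 ≤ n) (s : ℝ) :
    laguerreOne (n - 1) (2 * n * s) = ∑ j ∈ range n, cc n j * s ^ j := by
  rw [laguerreOne, show n - 1 + 1 = n by omega]
  refine Finset.sum_congr rfl fun j _ => ?_
  rw [cc, show (2 * (n:ℝ) * s) ^ j = (2 * (n:ℝ)) ^ j * s ^ j from mul_pow _ _ j]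
  ring

lemma hasDerivAt_lag (n : ℕ) (hn : 1 ≤ n) (t : ℝ) :
    HasDerivAt (fun s => laguerreOne (n - 1) (2 * n * s))
      (∑ j ∈ range n, cc n j * (j * t ^ (j - 1))) t := by
  have hfun : (fun s => laguerreOne (n - 1) (2 * (n:ℝ) * s))
      = fun s => ∑ j ∈ range n, cc n j * s ^ j := funext (lag_fun n hn)
  rw [hfun]
  exact HasDerivAt.fun_sum fun j _ => (hasDerivAt_pow j t).const_mul (cc n j)

lemma deriv_eq (n : ℕ) (hn : 2 ≤ n) (t : ℝ) :
    ∑ j ∈ range n, cc n j * (j * t ^ (j - 1))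
      = -(2 : ℝ) * n * coeff (n - 2) ((Phi t) ^ n) := by
  obtain ⟨N, rfl⟩ : ∃ N, n = N + 1 := ⟨n - 1, by omega⟩
  rw [coeff_Phi_pow, show N + 1 - 2 + 1 = N by omega]
  rw [Finset.sum_range_succ' _ N]
  have h0 : cc (N + 1) 0 * ((0:ℕ) * t ^ (0 - 1)) = 0 := by
    norm_num
  rw [h0, add_zero, Finset.mul_sum]
  refine Finset.sum_congr rfl fun i hi => ?_
  simp only [Finset.mem_range] at hi
  rw [cc, show (N + 1) - 1 - (i + 1) = (N + 1) - 2 - i by omega]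
  have e1 : ((i + 1).factorial : ℝ) = ((i : ℝ) + 1) * (i.factorial : ℝ) := by
    rw [Nat.factorial_succ]; push_cast; ring
  have e2 : ((-1 : ℝ)) ^ (i + 1) = (-1) ^ i * (-1) := pow_succ _ _
  have e3 : (2 * ((N + 1 : ℕ) : ℝ)) ^ (i + 1)
      = (2 * ((N + 1 : ℕ) : ℝ)) ^ i * (2 * ((N + 1 : ℕ) : ℝ)) := pow_succ _ _
  have e4 : (((N + 1 : ℕ) : ℝ) * (-(2 * t))) ^ i
      = (-1) ^ i * ((2 * ((N + 1 : ℕ) : ℝ)) ^ i * t ^ i) := by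
    rw [show ((N + 1 : ℕ) : ℝ) * (-(2 * t)) = (-1) * ((2 * ((N + 1 : ℕ) : ℝ)) * t) by
      push_cast; ring, mul_pow, mul_pow]
  rw [e1, e2, e3, e4]
  have hfac : (i.factorial : ℝ) ≠ 0 := Nat.cast_ne_zero.mpr (Nat.factorial_ne_zero i)
  have hi1 : ((i : ℝ) + 1) ≠ 0 := by positivity
  push_cast
  field_simp

end BMomDeriv

theorem bMom_ode (n : ℕ) (hn : 1 ≤ n) (t : ℝ) :
    HasDerivAt (fun s => bMom n s)
      (-(n : ℝ) * bMom n t - n * ∑ k ∈ Finset.Ico 1 n, bMom k t * bMom (n - k) t) t ∧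
    bMom n 0 = 1 := by
  constructor
  · have hn0 : (n : ℝ) ≠ 0 := by positivity
    have hfun : (fun s => bMom n s)
        = fun s => Real.exp (-(n : ℝ) * s) * ((1 / (n : ℝ)) * laguerreOne (n - 1) (2 * n * s)) := by
      funext s
      rw [bMom, if_neg (by omega)]
      ring
    have hexp : HasDerivAt (fun s => Real.exp (-(n : ℝ) * s))
        (-(n : ℝ) * Real.exp (-(n : ℝ) * t)) t := by
      have h1 : HasDerivAt (fun s : ℝ => -(n : ℝ) * s) (-(n : ℝ)) t := by
        simpa using (hasDerivAt_id t).const_mul (-(n : ℝ))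
      have h2 := (Real.hasDerivAt_exp (-(n : ℝ) * t)).comp t h1
      refine h2.congr_deriv ?_
      ring
    have hL : HasDerivAt (fun s => (1 / (n : ℝ)) * laguerreOne (n - 1) (2 * n * s))
        ((1 / (n : ℝ)) * ∑ j ∈ range n, BMomDeriv.cc n j * (j * t ^ (j - 1))) t :=
      (BMomDeriv.hasDerivAt_lag n hn t).const_mul _
    have hprod := hexp.fun_mul hL
    rw [hfun]
    refine hprod.congr_deriv ?_
    have hbt : bMom n t
        = Real.exp (-(n : ℝ) * t) * ((1 / (n : ℝ)) * laguerreOne (n - 1) (2 * n * t)) := by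
      rw [bMom, if_neg (by omega)]; ring
    have hmain : Real.exp (-(n : ℝ) * t)
          * ((1 / (n : ℝ)) * ∑ j ∈ range n, BMomDeriv.cc n j * (j * t ^ (j - 1)))
        = -(n : ℝ) * ∑ k ∈ Finset.Ico 1 n, bMom k t * bMom (n - k) t := by
      rcases Nat.lt_or_ge n 2 with h2 | h2
      · have hn1 : n = 1 := by omega
        subst hn1
        simp [BMomDeriv.cc]
      · -- n ≥ 2
        have hconv := BMomAux5.conv (BMomConcrete.Phi t)
          (by rw [BMomConcrete.constantCoeff_Phi]; exact one_ne_zero) n h2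
        have hsum : ∑ k ∈ Finset.Ico 1 n, bMom k t * bMom (n - k) t
            = Real.exp (-(n : ℝ) * t) * ∑ k ∈ Finset.Ico 1 n,
                (PowerSeries.coeff (k - 1) ((BMomConcrete.Phi t) ^ k) / k)
                  * (PowerSeries.coeff (n - k - 1) ((BMomConcrete.Phi t) ^ (n - k)) / (n - k)) := by
          rw [Finset.mul_sum]
          refine Finset.sum_congr rfl fun k hk => ?_
          simp only [Finset.mem_Ico] at hk
          rw [BMomLink.bMom_eq t k hk.1, BMomLink.bMom_eq t (n - k) (by omega),
            Nat.cast_sub (by omega : k ≤ n)]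
          have hee : Real.exp (-(k : ℝ) * t) * Real.exp (-((n : ℝ) - (k : ℝ)) * t)
              = Real.exp (-(n : ℝ) * t) := by
            rw [← Real.exp_add]
            congr 1
            ring
          rw [← hee]
          ring
        rw [BMomDeriv.deriv_eq n h2 t, hsum]
        have hcan : (1 / (n : ℝ)) * (-(2 : ℝ) * n
              * PowerSeries.coeff (n - 2) ((BMomConcrete.Phi t) ^ n))
            = -2 * PowerSeries.coeff (n - 2) ((BMomConcrete.Phi t) ^ n) := by
          field_simp
        rw [hcan]
        linear_combination (Real.exp (-(n : ℝ) * t)) * hconv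
    rw [hbt, hmain]
    ring
  · exact BMomLink.bMom_zero n hn
end
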